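/- Every finite tree with maximum degree at most n ≥ 2 that contains no path on 6 vertices as a subgraph has at most n² + 1 vertices. Moreover, this bound is attained by the tree t_n consisting of a root of degree n each of whose neighbors has n − 1 additional leaf children. -/

import Mathlib

open SimpleGraph Walk

variable {V : Type*} {G : SimpleGraph V}

private lemma getVert_mem_support' {u v : V} (p : G.Walk u v) (i : ℕ) :
    p.getVert i ∈ p.support := by
  induction p generalizing i with
  | nil => simp [Walk.getVert]
  | cons h q ih =>
    cases i with
    | zero => simp [Walk.getVert]
    | succ n => simpa [Walk.getVert] using Or.inr (ih n)

private lemma isPath_getVert_inj {u v : V} {p : G.Walk u v} (hp : p.IsPath) {i j : ℕ}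
    (hi : i ≤ p.length) (hj : j ≤ p.length) (h : p.getVert i = p.getVert j) : i = j := by
  induction p generalizing i j with
  | nil => simp only [Walk.length_nil, Nat.le_zero] at hi hj; omega
  | cons ha q ih =>
    rw [Walk.cons_isPath_iff] at hp
    cases i with
    | zero =>
      cases j with
      | zero => rfl
      | succ j =>
        exfalso
        apply hp.2
        rw [Walk.getVert_zero, Walk.getVert_cons_succ] at h
        rw [h]
        exact getVert_mem_support' q j
    | succ i =>
      cases j with
      | zero =>
        exfalso
        apply hp.2
        rw [Walk.getVert_zero, Walk.getVert_cons_succ] at h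
        rw [← h]
        exact getVert_mem_support' q i
      | succ j =>
        rw [Walk.getVert_cons_succ, Walk.getVert_cons_succ] at h
        simp only [Walk.length_cons] at hi hj
        exact congrArg Nat.succ (ih hp.1 (by omega) (by omega) h)

private lemma no_isPath_length_five {G : SimpleGraph V}
    (h : ¬ ∃ f : pathGraph 6 →g G, Function.Injective f)
    {x y : V} (p : G.Walk x y) (hp : p.IsPath) : p.length ≤ 4 := by
  by_contra hlen
  push_neg at hlen
  apply h
  refine ⟨⟨fun i => p.getVert i.val, ?_⟩, ?_⟩
  · intro a b hab
    rw [pathGraph_adj] at hab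
    rcases hab with h1 | h1
    · have := p.adj_getVert_succ (i := a.val) (by omega)
      rwa [h1] at this
    · have := p.adj_getVert_succ (i := b.val) (by omega)
      rw [h1] at this
      exact this.symm
  · intro a b hab
    exact Fin.ext (isPath_getVert_inj hp (by omega) (by omega) hab)

private lemma tree_path_length_eq_dist (hT : G.IsTree) {u v : V} (p : G.Walk u v)
    (hp : p.IsPath) : p.length = G.dist u v := by
  classical
  obtain ⟨q, hq⟩ := hT.isConnected.exists_walk_length_eq_dist u v
  have hb : q.bypass.IsPath := q.bypass_isPath
  have hpe : p = q.bypass := (hT.existsUnique_path u v).unique hp hb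
  have h1 : G.dist u v ≤ q.bypass.length := dist_le _
  have h2 : q.bypass.length ≤ q.length := q.length_bypass_le
  rw [hpe]
  omega

private lemma key_ext (hT : G.IsTree) {c z v : V} (r : G.Walk c z) (q : G.Walk c v)
    (hr : r.IsPath) (hq : q.IsPath) (hrq : r.getVert 1 ≠ q.getVert 1)
    (hrlen : r.length ≤ 2) (hqlen : 3 ≤ q.length) :
    ∃ w : G.Walk z (q.getVert 3), w.IsPath ∧ w.length = r.length + 3 := by
  classical
  have h1 : G.Adj c (q.getVert 1) := by
    have := q.adj_getVert_succ (i := 0) (by omega); rwa [Walk.getVert_zero] at this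
  have h2 : G.Adj (q.getVert 1) (q.getVert 2) := q.adj_getVert_succ (by omega)
  have h3 : G.Adj (q.getVert 2) (q.getVert 3) := q.adj_getVert_succ (by omega)
  have hne : ∀ i j : ℕ, i ≤ 3 → j ≤ 3 → i ≠ j → q.getVert i ≠ q.getVert j := by
    intro i j hi hj hij h; exact hij (isPath_getVert_inj hq (by omega) (by omega) h)
  have hnec : ∀ i : ℕ, 1 ≤ i → i ≤ 3 → q.getVert i ≠ c := by
    intro i h1i h3i
    have := hne i 0 (by omega) (by omega) (by omega)
    rwa [Walk.getVert_zero] at this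
  -- the three-step prefix of q, built explicitly
  have hmem : ∀ k : ℕ, 1 ≤ k → k ≤ 3 → q.getVert k ∉ r.support := by
    intro k hk1 hk3 hs
    set t' := r.takeUntil _ hs with ht'def
    have ht'p : t'.IsPath := hr.takeUntil hs
    have ht'len : t'.length ≤ r.length := r.length_takeUntil_le hs
    have ht'pos : 1 ≤ t'.length := by
      rcases Nat.eq_zero_or_pos t'.length with h0 | h
      · exact absurd (Walk.eq_of_length_eq_zero h0).symm (hnec k hk1 hk3)
      · exact h
    have hr1 : r.getVert 1 = t'.getVert 1 := by
      conv_lhs => rw [← r.take_spec hs]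
      rw [Walk.getVert_append]
      rw [← ht'def]
      split_ifs with hlt
      · rfl
      · have hl1 : t'.length = 1 := by omega
        rw [hl1, Nat.sub_self, Walk.getVert_zero]
        conv_rhs => rw [show (1:ℕ) = t'.length from hl1.symm, Walk.getVert_length]
    -- explicit prefix path of q of length k
    interval_cases k
    · -- k = 1 : t' and the single edge [c, q.getVert 1]
      have htq : t' = Walk.cons h1 Walk.nil :=
        (hT.existsUnique_path c (q.getVert 1)).unique ht'p (by
          simp [Walk.cons_isPath_iff, (hnec 1 (by omega) (by omega)).symm])
      apply hrq
      rw [hr1, htq]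
      rfl
    · -- k = 2
      have htq : t' = Walk.cons h1 (Walk.cons h2 Walk.nil) :=
        (hT.existsUnique_path c (q.getVert 2)).unique ht'p (by
          simp [Walk.cons_isPath_iff, (hnec 1 (by omega) (by omega)).symm,
            (hnec 2 (by omega) (by omega)).symm, hne 1 2 (by omega) (by omega) (by omega)])
      apply hrq
      rw [hr1, htq]
      rfl
    · -- k = 3 : length 3 > 2 contradiction
      have htq : t' = Walk.cons h1 (Walk.cons h2 (Walk.cons h3 Walk.nil)) :=
        (hT.existsUnique_path c (q.getVert 3)).unique ht'p (by
          simp [Walk.cons_isPath_iff, (hnec 1 (by omega) (by omega)).symm,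
            (hnec 2 (by omega) (by omega)).symm, (hnec 3 (by omega) (by omega)).symm,
            hne 1 2 (by omega) (by omega) (by omega), hne 1 3 (by omega) (by omega) (by omega),
            hne 2 3 (by omega) (by omega) (by omega)])
      have : t'.length = 3 := by rw [htq]; rfl
      omega
  refine ⟨r.reverse.append (Walk.cons h1 (Walk.cons h2 (Walk.cons h3 Walk.nil))), ?_, ?_⟩
  · rw [Walk.isPath_def, Walk.support_append, Walk.support_reverse]
    rw [List.nodup_append]
    refine ⟨List.nodup_reverse.mpr hr.support_nodup, ?_, ?_⟩
    · simp [hne 1 2 (by omega) (by omega) (by omega), hne 1 3 (by omega) (by omega) (by omega),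
        hne 2 3 (by omega) (by omega) (by omega)]
    · intro s hs1 _ hs2 rfl
      simp only [Walk.support_cons, Walk.support_nil, List.tail_cons, List.mem_cons,
        List.mem_singleton, List.not_mem_nil] at hs2
      rw [List.mem_reverse] at hs1
      rcases hs2 with rfl | rfl | rfl | h
      · exact hmem 1 (by omega) (by omega) hs1
      · exact hmem 2 (by omega) (by omega) hs1
      · exact hmem 3 (by omega) (by omega) hs1
      · exact h
  · simp [Walk.length_append, Walk.length_reverse]

private lemma exists_center {W : Type} [Fintype W] (T : SimpleGraph W) (hT : T.IsTree)
    (hnp : ¬ ∃ f : pathGraph 6 →g T, Function.Injective f) :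
    ∃ c : W, ∀ v : W, T.dist c v ≤ 2 := by
  classical
  have hconn := hT.isConnected
  have hne : Nonempty W := hconn.nonempty
  obtain ⟨xy, -, hmax0⟩ := Finset.exists_max_image (Finset.univ ×ˢ Finset.univ)
    (fun p : W × W => T.dist p.1 p.2) (by
      obtain ⟨w⟩ := hne
      exact ⟨(w, w), by simp⟩)
  obtain ⟨x, y⟩ := xy
  have hmax : ∀ u v : W, T.dist u v ≤ T.dist x y := fun u v => hmax0 (u, v) (by simp)
  obtain ⟨q0, hq0⟩ := hconn.exists_walk_length_eq_dist x y
  set p := q0.bypass with hpdef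
  have hp : p.IsPath := q0.bypass_isPath
  have hplen : p.length = T.dist x y :=
    le_antisymm (hq0 ▸ q0.length_bypass_le) (dist_le _)
  have hD4 : p.length ≤ 4 := no_isPath_length_five hnp p hp
  -- the generic midpoint argument
  have main : ∀ (c z1 z2 : W) (r1 : T.Walk c z1) (r2 : T.Walk c z2),
      r1.IsPath → r2.IsPath → r1.getVert 1 ≠ r2.getVert 1 →
      1 ≤ r1.length → r1.length ≤ 2 → r2.length = 2 →
      r1.length + r2.length = T.dist x y →
      ∀ v, T.dist c v ≤ 2 := by
    intro c z1 z2 r1 r2 hr1 hr2 hr12 hl1a hl1b hl2 hsum v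
    by_contra hv
    push_neg at hv
    obtain ⟨w0, hw0⟩ := hconn.exists_walk_length_eq_dist c v
    have hq : w0.bypass.IsPath := w0.bypass_isPath
    have hqlen : w0.bypass.length = T.dist c v :=
      le_antisymm (hw0 ▸ w0.length_bypass_le) (dist_le _)
    have hq3 : 3 ≤ w0.bypass.length := by omega
    by_cases hcase : w0.bypass.getVert 1 = r1.getVert 1
    · -- use r2
      obtain ⟨w, hwp, hwl⟩ := key_ext hT r2 w0.bypass hr2 hq (by rw [← hcase] at hr12; exact fun h => hr12 h.symm) (by omega) hq3
      have hd := tree_path_length_eq_dist hT w hwp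
      have := hmax z2 (w0.bypass.getVert 3)
      omega
    · obtain ⟨w, hwp, hwl⟩ := key_ext hT r1 w0.bypass hr1 hq (fun h => hcase h.symm) (by omega) hq3
      have hd := tree_path_length_eq_dist hT w hwp
      have := hmax z1 (w0.bypass.getVert 3)
      omega
  have hgv : ∀ i j : ℕ, i ≤ p.length → j ≤ p.length → i ≠ j → p.getVert i ≠ p.getVert j :=
    fun i j hi hj hij h => hij (isPath_getVert_inj hp hi hj h)
  rcases Nat.lt_or_ge p.length 3 with hlt | hge
  · exact ⟨x, fun v => le_trans (hmax x v) (by omega)⟩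
  have h01 : T.Adj (p.getVert 0) (p.getVert 1) := p.adj_getVert_succ (by omega)
  have h12 : T.Adj (p.getVert 1) (p.getVert 2) := p.adj_getVert_succ (by omega)
  have h23 : T.Adj (p.getVert 2) (p.getVert 3) := p.adj_getVert_succ (by omega)
  rcases Nat.lt_or_ge p.length 4 with hlt4 | hge4
  · -- length 3 : center p.getVert 1
    have hlen3 : p.length = 3 := by omega
    refine ⟨p.getVert 1, main _ _ _ (Walk.cons h01.symm Walk.nil)
      (Walk.cons h12 (Walk.cons h23 Walk.nil)) ?_ ?_ ?_ (by simp) (by simp) (by simp)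
      (by simp [hlen3, ← hplen]) ⟩
    · have n1x : p.getVert 1 ≠ x := fun h =>
        hgv 1 0 (by omega) (by omega) (by omega) (h.trans p.getVert_zero.symm)
      simp [Walk.cons_isPath_iff, n1x]
    · simp [Walk.cons_isPath_iff, hgv 2 3 (by omega) (by omega) (by omega),
        hgv 1 2 (by omega) (by omega) (by omega), hgv 1 3 (by omega) (by omega) (by omega)]
    · show p.getVert 0 ≠ p.getVert 2
      exact hgv 0 2 (by omega) (by omega) (by omega)
  · -- length 4 : center p.getVert 2
    have hlen4 : p.length = 4 := by omega
    have h34 : T.Adj (p.getVert 3) (p.getVert 4) := p.adj_getVert_succ (by omega)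
    refine ⟨p.getVert 2, main _ _ _ (Walk.cons h12.symm (Walk.cons h01.symm Walk.nil))
      (Walk.cons h23 (Walk.cons h34 Walk.nil)) ?_ ?_ ?_ (by simp) (by simp) (by simp)
      (by simp [hlen4, ← hplen]) ⟩
    · have n1x : p.getVert 1 ≠ x := fun h =>
        hgv 1 0 (by omega) (by omega) (by omega) (h.trans p.getVert_zero.symm)
      have n2x : p.getVert 2 ≠ x := fun h =>
        hgv 2 0 (by omega) (by omega) (by omega) (h.trans p.getVert_zero.symm)
      simp [Walk.cons_isPath_iff, n1x, n2x, hgv 2 1 (by omega) (by omega) (by omega)]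
    · simp [Walk.cons_isPath_iff, hgv 3 4 (by omega) (by omega) (by omega),
        hgv 2 3 (by omega) (by omega) (by omega), hgv 2 4 (by omega) (by omega) (by omega)]
    · show p.getVert 1 ≠ p.getVert 3
      exact hgv 1 3 (by omega) (by omega) (by omega)

private lemma part1 (n : ℕ) (W : Type) [Fintype W] (T : SimpleGraph W) (hT : T.IsTree)
    (hdeg : ∀ v : W, (T.neighborSet v).ncard ≤ n)
    (hnp : ¬ ∃ f : pathGraph 6 →g T, Function.Injective f) :
    Fintype.card W ≤ n ^ 2 + 1 := by
  classical
  obtain ⟨c, hc⟩ := exists_center T hT hnp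
  have hconn := hT.isConnected
  have hdeg' : ∀ v : W, (T.neighborFinset v).card ≤ n := by
    intro v
    rw [neighborFinset_def, ← Set.ncard_eq_toFinset_card']
    exact hdeg v
  set S1 := T.neighborFinset c with hS1
  set S2 := S1.biUnion (fun u => T.neighborFinset u \ {c}) with hS2
  have hsub : (Finset.univ : Finset W) ⊆ insert c (S1 ∪ S2) := by
    intro v _
    obtain ⟨w, hw⟩ := hconn.exists_walk_length_eq_dist c v
    have hw2 : w.length ≤ 2 := hw ▸ hc v
    interval_cases h : w.length
    · have : c = v := Walk.eq_of_length_eq_zero h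
      simp [this.symm]
    · have : T.Adj c v := by
        have := w.adj_getVert_succ (i := 0) (by omega)
        rwa [w.getVert_zero, show w.getVert 1 = v from by
          rw [← h]; exact w.getVert_length] at this
      simp [Finset.mem_insert, Finset.mem_union, hS1, this]
    · have h1 : T.Adj c (w.getVert 1) := by
        have := w.adj_getVert_succ (i := 0) (by omega)
        rwa [w.getVert_zero] at this
      have h2 : T.Adj (w.getVert 1) v := by
        have := w.adj_getVert_succ (i := 1) (by omega)
        rwa [show w.getVert 2 = v from by rw [← h]; exact w.getVert_length] at this
      have hvc : v ≠ c := by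
        rintro rfl
        rw [SimpleGraph.dist_self] at hw
        omega
      apply Finset.mem_insert_of_mem
      apply Finset.mem_union_right
      rw [hS2, Finset.mem_biUnion]
      exact ⟨w.getVert 1, by simpa [hS1] using h1, by simp [h2, hvc]⟩
  have hcard2 : S2.card ≤ n * (n - 1) := by
    calc S2.card ≤ ∑ u ∈ S1, (T.neighborFinset u \ {c}).card := Finset.card_biUnion_le
    _ ≤ ∑ _u ∈ S1, (n - 1) := by
        apply Finset.sum_le_sum
        intro u hu
        have hcmem : c ∈ T.neighborFinset u := by
          rw [SimpleGraph.mem_neighborFinset]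
          exact (by simpa [hS1, SimpleGraph.mem_neighborFinset] using hu : T.Adj c u).symm
        rw [Finset.card_sdiff_of_subset (by simpa using hcmem)]
        have := hdeg' u
        simp only [Finset.card_singleton]
        omega
    _ = S1.card * (n - 1) := by rw [Finset.sum_const, smul_eq_mul]
    _ ≤ n * (n - 1) := Nat.mul_le_mul_right _ (hdeg' c)
  have hA : Fintype.card W ≤ (insert c (S1 ∪ S2)).card := Finset.card_le_card hsub
  have hB := Finset.card_insert_le c (S1 ∪ S2)
  have hC := Finset.card_union_le S1 S2
  have hS1c : S1.card ≤ n := hdeg' c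
  have hsq : n * (n - 1) + n = n ^ 2 := by
    cases n with
    | zero => simp
    | succ m => rw [pow_two]; simp [Nat.succ_sub_one]; ring
  omega


private def par (n v : ℕ) : ℕ := if v ≤ n then 0 else (v - n - 1) / (n - 1) + 1

private def tGraph (n : ℕ) : SimpleGraph (Fin (n ^ 2 + 1)) :=
  SimpleGraph.fromRel (fun u v => (v : ℕ) ≠ 0 ∧ (u : ℕ) = par n (v : ℕ))

private lemma par_lt {n v : ℕ} (hn : 2 ≤ n) (hv : v ≠ 0) : par n v < v := by
  unfold par
  split_ifs with h
  · omega
  · have := Nat.div_le_self (v - n - 1) (n - 1)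
    omega

private lemma par_le {n v : ℕ} (hn : 2 ≤ n) (hv : v ≤ n ^ 2) : par n v ≤ n := by
  unfold par
  split_ifs with h
  · omega
  · have hdiv : (v - n - 1) / (n - 1) < n := by
      rw [Nat.div_lt_iff_lt_mul (by omega)]
      have : n ^ 2 = n * n := by ring
      have h2 : n * (n - 1) + n = n * n := by
        cases n with
        | zero => simp
        | succ m => simp [Nat.succ_sub_one]; ring
      omega
    omega

private lemma par_eq_iff {n u v : ℕ} (hn : 2 ≤ n) (hu1 : 1 ≤ u) :
    (v ≠ 0 ∧ par n v = u) ↔ (n + (u - 1) * (n - 1) + 1 ≤ v ∧ v ≤ n + u * (n - 1)) := by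
  obtain ⟨k, rfl⟩ : ∃ k, u = k + 1 := ⟨u - 1, by omega⟩
  simp only [Nat.add_sub_cancel]
  have hmul : (k + 1) * (n - 1) = k * (n - 1) + (n - 1) := by ring
  unfold par
  constructor
  · rintro ⟨h0, hp⟩
    split_ifs at hp with h
    have hd : (v - n - 1) / (n - 1) = k := by omega
    have h1 := Nat.div_mul_le_self (v - n - 1) (n - 1)
    rw [hd] at h1
    have h2 : v - n - 1 < (k + 1) * (n - 1) := by
      by_contra hc
      push_neg at hc
      have h3 : k + 1 ≤ (v - n - 1) / (n - 1) :=
        (Nat.le_div_iff_mul_le (by omega)).mpr hc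
      omega
    omega
  · rintro ⟨h1, h2⟩
    have hpos : 1 ≤ (k + 1) * (n - 1) := by
      have : 1 * 1 ≤ (k + 1) * (n - 1) := Nat.mul_le_mul (by omega) (by omega)
      omega
    have hvn : ¬ v ≤ n := by omega
    rw [if_neg hvn]
    have hd : (v - n - 1) / (n - 1) = k :=
      Nat.div_eq_of_lt_le (by omega) (by omega)
    omega

private lemma tGraph_adj {n : ℕ} (hn : 2 ≤ n) {u v : Fin (n ^ 2 + 1)} :
    (tGraph n).Adj u v ↔
      (((v : ℕ) ≠ 0 ∧ (u : ℕ) = par n (v : ℕ)) ∨ ((u : ℕ) ≠ 0 ∧ (v : ℕ) = par n (u : ℕ))) := by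
  rw [tGraph, fromRel_adj]
  constructor
  · rintro ⟨-, h⟩; exact h
  · intro h
    refine ⟨?_, h⟩
    rintro rfl
    rcases h with ⟨h0, hp⟩ | ⟨h0, hp⟩ <;>
      exact absurd hp (by have := par_lt (n := n) hn h0; omega)

private instance tGraphDec {n : ℕ} : DecidableRel (tGraph n).Adj := fun u v =>
  decidable_of_iff (u ≠ v ∧ (((v : ℕ) ≠ 0 ∧ (u : ℕ) = par n (v : ℕ)) ∨
      ((u : ℕ) ≠ 0 ∧ (v : ℕ) = par n (u : ℕ))))
    (by rw [tGraph, fromRel_adj])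

private lemma nsq_arith {n : ℕ} : n * (n - 1) + n = n ^ 2 := by
  cases n with
  | zero => simp
  | succ m => rw [pow_two]; simp [Nat.succ_sub_one]; ring

private lemma n_le_sq {n : ℕ} (hn : 2 ≤ n) : n ≤ n ^ 2 := by
  have h := nsq_arith (n := n)
  omega

private lemma val_le_sq {n : ℕ} (v : Fin (n ^ 2 + 1)) : (v : ℕ) ≤ n ^ 2 := by
  have := v.isLt; omega

private lemma par_lt_card {n : ℕ} (hn : 2 ≤ n) (v : Fin (n ^ 2 + 1)) :
    par n (v : ℕ) < n ^ 2 + 1 := by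
  have h1 : par n (v : ℕ) ≤ n := par_le hn (val_le_sq v)
  have := n_le_sq hn
  omega

-- neighbor finset of the root
private lemma nbhd_root {n : ℕ} (hn : 2 ≤ n) :
    (tGraph n).neighborFinset (0 : Fin (n ^ 2 + 1)) =
      Finset.attachFin (Finset.Icc 1 n)
        (fun m hm => by
          rw [Finset.mem_Icc] at hm
          have := n_le_sq hn
          omega) := by
  ext v
  rw [SimpleGraph.mem_neighborFinset, Finset.mem_attachFin, Finset.mem_Icc, tGraph_adj hn]
  simp only [Fin.val_zero]
  constructor
  · rintro (⟨h0, hp⟩ | ⟨h0, _⟩)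
    · unfold par at hp
      split_ifs at hp with h
      omega
    · omega
  · rintro ⟨h1, h2⟩
    exact Or.inl ⟨by omega, by unfold par; rw [if_pos h2]⟩

private lemma mid_bound {n : ℕ} (hn : 2 ≤ n) {u : ℕ} (h2 : u ≤ n) :
    n + u * (n - 1) ≤ n ^ 2 := by
  have h3 : u * (n - 1) ≤ n * (n - 1) := Nat.mul_le_mul_right _ h2
  have h4 := nsq_arith (n := n)
  omega

private lemma nbhd_mid {n : ℕ} (hn : 2 ≤ n) (u : Fin (n ^ 2 + 1))
    (h1 : 1 ≤ (u : ℕ)) (h2 : (u : ℕ) ≤ n) :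
    (tGraph n).neighborFinset u =
      Finset.attachFin (insert 0 (Finset.Icc (n + ((u : ℕ) - 1) * (n - 1) + 1)
          (n + (u : ℕ) * (n - 1))))
        (fun m hm => by
          simp only [Finset.mem_insert, Finset.mem_Icc] at hm
          have := mid_bound hn h2
          rcases hm with rfl | ⟨-, hm⟩ <;> omega) := by
  ext v
  rw [SimpleGraph.mem_neighborFinset, Finset.mem_attachFin, Finset.mem_insert, Finset.mem_Icc,
    tGraph_adj hn]
  have hparu : par n (u : ℕ) = 0 := by unfold par; rw [if_pos h2]
  constructor
  · rintro (⟨h0, hp⟩ | ⟨h0, hp⟩)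
    · exact Or.inr ((par_eq_iff hn h1).mp ⟨h0, hp.symm⟩)
    · rw [hparu] at hp; exact Or.inl hp
  · rintro (h0 | hv)
    · exact Or.inr ⟨by omega, by rw [hparu, h0]⟩
    · exact Or.inl (by
        have := (par_eq_iff hn h1).mpr hv
        exact ⟨this.1, this.2.symm⟩)

private lemma nbhd_leaf {n : ℕ} (hn : 2 ≤ n) (v : Fin (n ^ 2 + 1)) (hv : n < (v : ℕ)) :
    (tGraph n).neighborFinset v = {⟨par n (v : ℕ), par_lt_card hn v⟩} := by
  ext w
  rw [SimpleGraph.mem_neighborFinset, Finset.mem_singleton, tGraph_adj hn]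
  constructor
  · rintro (⟨h0, hp⟩ | ⟨h0, hp⟩)
    · have := par_le hn (val_le_sq w)
      omega
    · exact Fin.ext hp
  · rintro rfl
    exact Or.inr ⟨by omega, rfl⟩

private lemma deg_root {n : ℕ} (hn : 2 ≤ n) :
    ((tGraph n).neighborFinset (0 : Fin (n ^ 2 + 1))).card = n := by
  rw [nbhd_root hn, Finset.card_attachFin, Nat.card_Icc]
  omega

private lemma deg_mid {n : ℕ} (hn : 2 ≤ n) (u : Fin (n ^ 2 + 1))
    (h1 : 1 ≤ (u : ℕ)) (h2 : (u : ℕ) ≤ n) :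
    ((tGraph n).neighborFinset u).card = n := by
  rw [nbhd_mid hn u h1 h2, Finset.card_attachFin,
    Finset.card_insert_of_notMem (by rw [Finset.mem_Icc]; omega), Nat.card_Icc]
  obtain ⟨k, hk⟩ : ∃ k, (u : ℕ) = k + 1 := ⟨(u : ℕ) - 1, by omega⟩
  rw [hk]
  simp only [Nat.add_sub_cancel]
  have hmul : (k + 1) * (n - 1) = k * (n - 1) + (n - 1) := by ring
  omega

private lemma deg_leaf {n : ℕ} (hn : 2 ≤ n) (v : Fin (n ^ 2 + 1)) (hv : n < (v : ℕ)) :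
    ((tGraph n).neighborFinset v).card = 1 := by
  rw [nbhd_leaf hn v hv, Finset.card_singleton]

private lemma ncard_eq_deg {n : ℕ} (v : Fin (n ^ 2 + 1)) :
    ((tGraph n).neighborSet v).ncard = ((tGraph n).neighborFinset v).card := by
  rw [neighborFinset_def, ← Set.ncard_eq_toFinset_card']

private lemma tGraph_conn {n : ℕ} (hn : 2 ≤ n) : (tGraph n).Connected := by
  have hreach : ∀ m : ℕ, ∀ v : Fin (n ^ 2 + 1), (v : ℕ) = m → (tGraph n).Reachable v 0 := by
    intro m
    induction m using Nat.strong_induction_on with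
    | _ m ih =>
      intro v hv
      rcases Nat.eq_zero_or_pos m with h0 | h0
      · have : v = 0 := Fin.ext (by simp [hv, h0])
        rw [this]
      · have hadj : (tGraph n).Adj v ⟨par n (v : ℕ), par_lt_card hn v⟩ := by
          rw [tGraph_adj hn]
          exact Or.inr ⟨by omega, rfl⟩
        have hlt : par n (v : ℕ) < m := hv ▸ par_lt hn (by omega)
        exact hadj.reachable.trans (ih _ hlt _ rfl)
  haveI : Nonempty (Fin (n ^ 2 + 1)) := ⟨0⟩
  exact Connected.mk (fun u v => (hreach _ u rfl).trans (hreach _ v rfl).symm)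

private lemma end_mem_support_tail {V : Type*} {G : SimpleGraph V} {u : V} (p : G.Walk u u)
    (hnil : ¬ p.Nil) : u ∈ p.support.tail := by
  cases p with
  | nil => simp at hnil
  | cons h q => simpa using q.end_mem_support

private lemma first_edge_mem {V : Type*} {G : SimpleGraph V} {a b : V} (q : G.Walk a b)
    (h : ¬ q.Nil) : s(a, q.getVert 1) ∈ q.edges := by
  cases q with
  | nil => simp at h
  | cons h' q' => simp [Walk.edges_cons, Walk.getVert_cons_succ]

private lemma tGraph_acyclic {n : ℕ} (hn : 2 ≤ n) : (tGraph n).IsAcyclic := by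
  classical
  intro v c hc
  obtain ⟨m, hm, hmax⟩ := Finset.exists_max_image c.support.toFinset (fun w => (w : ℕ))
    ⟨v, by simp [c.start_mem_support]⟩
  rw [List.mem_toFinset] at hm
  have hmax' : ∀ w ∈ c.support, (w : ℕ) ≤ (m : ℕ) := fun w hw =>
    hmax w (List.mem_toFinset.mpr hw)
  set d := c.rotate m hm with hddef
  have hdc : d.IsCycle := hc.rotate hm
  have hnil : ¬ d.Nil := hdc.not_nil
  have hdsup : ∀ w ∈ d.support, (w : ℕ) ≤ (m : ℕ) := by
    intro w hw
    apply hmax'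
    have h1 : w ∈ d.support.tail := by
      rw [d.support_eq_cons] at hw
      rcases List.mem_cons.mp hw with rfl | h
      · exact end_mem_support_tail d hnil
      · exact h
    have h2 : w ∈ c.support.tail := ((c.support_rotate m hm).mem_iff).mp h1
    exact List.mem_of_mem_tail h2
  have hdc' := hdc
  rw [← Walk.cons_tail_eq d hnil, Walk.cons_isCycle_iff] at hdc'
  obtain ⟨hpath, hedge⟩ := hdc'
  set x := d.getVert 1 with hx
  set p := d.tail with hp
  have hplen : 2 ≤ p.length := by
    have h3 := hdc.three_le_length
    have h4 : p.length + 1 = d.length := by rw [hp]; exact Walk.length_tail_add_one hnil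
    omega
  set y := p.getVert (p.length - 1) with hy
  have hclass : ∀ w : Fin (n ^ 2 + 1), (tGraph n).Adj m w → (w : ℕ) ≤ (m : ℕ) →
      (w : ℕ) = par n (m : ℕ) := by
    intro w hw hle
    rw [tGraph_adj hn] at hw
    rcases hw with ⟨h0, hpp⟩ | ⟨h0, hpp⟩
    · have := par_lt (n := n) hn h0
      omega
    · exact hpp
  have hxm : (tGraph n).Adj m x := d.adj_snd hnil
  have hym : (tGraph n).Adj m y := by
    have h5 := p.adj_getVert_succ (i := p.length - 1) (by omega)
    rw [show p.length - 1 + 1 = p.length from by omega, p.getVert_length] at h5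
    exact h5.symm
  have hxin : x ∈ d.support := getVert_mem_support' d 1
  have hyin : y ∈ d.support := by
    rw [← Walk.cons_tail_eq d hnil, Walk.support_cons]
    exact List.mem_cons_of_mem _ (getVert_mem_support' p _)
  have hxval : (x : ℕ) = par n (m : ℕ) := hclass x hxm (hdsup x hxin)
  have hyval : (y : ℕ) = par n (m : ℕ) := hclass y hym (hdsup y hyin)
  have hxy : x = y := Fin.ext (by omega)
  -- last edge of p is s(y, m) = s(x, m), contradicting hedge
  have hrnil : ¬ p.reverse.Nil := by
    rw [Walk.nil_iff_length_eq, Walk.length_reverse]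
    omega
  have hmem : s((m : Fin (n ^ 2 + 1)), p.reverse.getVert 1) ∈ p.reverse.edges :=
    first_edge_mem p.reverse hrnil
  rw [Walk.edges_reverse, List.mem_reverse, Walk.getVert_reverse] at hmem
  apply hedge
  rw [show s((m : Fin (n ^ 2 + 1)), d.getVert 1) = s(m, p.getVert (p.length - 1)) from
    congrArg (fun z => s((m : Fin (n ^ 2 + 1)), z)) hxy]
  exact hmem

private lemma tGraph_noP6 {n : ℕ} (hn : 2 ≤ n) :
    ¬ ∃ f : pathGraph 6 →g tGraph n, Function.Injective f := by
  rintro ⟨f, hf⟩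
  set lvl : Fin (n ^ 2 + 1) → ℕ :=
    fun v => if (v : ℕ) = 0 then 0 else if (v : ℕ) ≤ n then 1 else 2 with hlvl
  have hlvl_eq : ∀ w : Fin (n ^ 2 + 1),
      (lvl w = 0 ∧ (w : ℕ) = 0) ∨ (lvl w = 1 ∧ 1 ≤ (w : ℕ) ∧ (w : ℕ) ≤ n) ∨
        (lvl w = 2 ∧ n < (w : ℕ)) := by
    intro w
    simp only [hlvl]
    split_ifs with a b
    exacts [Or.inl ⟨rfl, a⟩, Or.inr (Or.inl ⟨rfl, by omega⟩), Or.inr (Or.inr ⟨rfl, by omega⟩)]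
  have hadj : ∀ i j : Fin 6, (i : ℕ) + 1 = (j : ℕ) → (tGraph n).Adj (f i) (f j) :=
    fun i j h => f.map_adj (pathGraph_adj.mpr (Or.inl h))
  have key : ∀ u v : Fin (n ^ 2 + 1), (v : ℕ) ≠ 0 → (u : ℕ) = par n (v : ℕ) →
      lvl u + lvl v = 1 ∨ lvl u + lvl v = 3 := by
    intro u v h0 hp
    by_cases hvn : (v : ℕ) ≤ n
    · have hz : par n (v : ℕ) = 0 := by unfold par; rw [if_pos hvn]
      rcases hlvl_eq u with ⟨e1, e2⟩ | ⟨e1, e2⟩ | ⟨e1, e2⟩ <;>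
        rcases hlvl_eq v with ⟨g1, g2⟩ | ⟨g1, g2⟩ | ⟨g1, g2⟩ <;> omega
    · have hz1 : 1 ≤ par n (v : ℕ) := by unfold par; rw [if_neg hvn]; exact Nat.succ_le_succ (Nat.zero_le _)
      have hz2 : par n (v : ℕ) ≤ n := par_le hn (val_le_sq v)
      rcases hlvl_eq u with ⟨e1, e2⟩ | ⟨e1, e2⟩ | ⟨e1, e2⟩ <;>
        rcases hlvl_eq v with ⟨g1, g2⟩ | ⟨g1, g2⟩ | ⟨g1, g2⟩ <;> omega
  have hsum : ∀ u v, (tGraph n).Adj u v → lvl u + lvl v = 1 ∨ lvl u + lvl v = 3 := by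
    intro u v huv
    rw [tGraph_adj hn] at huv
    rcases huv with ⟨h0, hp⟩ | ⟨h0, hp⟩
    · exact key u v h0 hp
    · have := key v u h0 hp
      omega
  have hnbr2 : ∀ u v, (tGraph n).Adj u v → n < (v : ℕ) → (u : ℕ) = par n (v : ℕ) := by
    intro u v huv hgt
    rw [tGraph_adj hn] at huv
    rcases huv with ⟨h0, hp⟩ | ⟨h0, hp⟩
    · exact hp
    · have := par_le hn (val_le_sq u)
      omega
  have claim2 : ∀ i : Fin 6, 1 ≤ (i : ℕ) → (i : ℕ) ≤ 4 → ¬ n < ((f i : Fin (n ^ 2 + 1)) : ℕ) := by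
    intro i h1 h4 hgt
    set iprev : Fin 6 := ⟨(i : ℕ) - 1, by omega⟩ with hip
    set inext : Fin 6 := ⟨(i : ℕ) + 1, by omega⟩ with hin
    have ha1 : (tGraph n).Adj (f iprev) (f i) := hadj iprev i (by simp [hip]; omega)
    have ha2 : (tGraph n).Adj (f inext) (f i) := (hadj i inext (by simp [hin])).symm
    have hv1 := hnbr2 _ _ ha1 hgt
    have hv2 := hnbr2 _ _ ha2 hgt
    have hfe : ((f iprev : Fin (n ^ 2 + 1)) : ℕ) = ((f inext : Fin (n ^ 2 + 1)) : ℕ) := by omega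
    have heq : iprev = inext := hf (Fin.ext hfe)
    have hvv : ((iprev : Fin 6) : ℕ) = ((inext : Fin 6) : ℕ) := by rw [heq]
    simp only [hip, hin] at hvv
    omega
  have n2 : ∀ i : Fin 6, 1 ≤ (i : ℕ) → (i : ℕ) ≤ 4 → lvl (f i) = 0 ∨ lvl (f i) = 1 := by
    intro i h1 h4
    rcases hlvl_eq (f i) with ⟨e1, -⟩ | ⟨e1, -⟩ | ⟨e1, e2⟩
    · exact Or.inl e1
    · exact Or.inr e1
    · exact absurd e2 (claim2 i h1 h4)
  have z : ∀ i : Fin 6, lvl (f i) = 0 → f i = 0 := by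
    intro i h
    rcases hlvl_eq (f i) with ⟨-, e2⟩ | ⟨e1, -⟩ | ⟨e1, -⟩
    · exact Fin.ext (by simpa using e2)
    · omega
    · omega
  have h12 := hsum _ _ (hadj 1 2 (by decide))
  have h23 := hsum _ _ (hadj 2 3 (by decide))
  have h34 := hsum _ _ (hadj 3 4 (by decide))
  have e1 := n2 1 (by decide) (by decide)
  have e2 := n2 2 (by decide) (by decide)
  have e3 := n2 3 (by decide) (by decide)
  have e4 := n2 4 (by decide) (by decide)
  have halt : (lvl (f 1) = 0 ∧ lvl (f 3) = 0) ∨ (lvl (f 2) = 0 ∧ lvl (f 4) = 0) := by omega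
  rcases halt with ⟨ha, hb⟩ | ⟨ha, hb⟩
  · exact absurd (hf ((z _ ha).trans (z _ hb).symm)) (by decide)
  · exact absurd (hf ((z _ ha).trans (z _ hb).symm)) (by decide)

private lemma deg_all {n : ℕ} (hn : 2 ≤ n) (v : Fin (n ^ 2 + 1)) :
    ((tGraph n).neighborSet v).ncard ≤ n := by
  rw [ncard_eq_deg]
  rcases Nat.lt_or_ge n (v : ℕ) with h | h
  · rw [deg_leaf hn v h]; omega
  · rcases Nat.eq_zero_or_pos (v : ℕ) with h0 | h0
    · have hv0 : v = 0 := Fin.ext (by simpa using h0)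
      rw [hv0, deg_root hn]
    · rw [deg_mid hn v h0 h]

theorem stmt_13 (n : ℕ) (hn : 2 ≤ n) :
    (∀ (V : Type) [Fintype V] (T : SimpleGraph V), T.IsTree →
        (∀ v : V, (T.neighborSet v).ncard ≤ n) →
        (¬ ∃ f : pathGraph 6 →g T, Function.Injective f) →
        Fintype.card V ≤ n ^ 2 + 1) ∧
    (∃ T : SimpleGraph (Fin (n ^ 2 + 1)), T.IsTree ∧
        (∀ v, (T.neighborSet v).ncard ≤ n) ∧
        (¬ ∃ f : pathGraph 6 →g T, Function.Injective f) ∧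
        ∃ root, (T.neighborSet root).ncard = n ∧
          ∀ v ∈ T.neighborSet root, (T.neighborSet v).ncard = n) := by
  constructor
  · intro V _ T hT hdeg hnp
    exact part1 n V T hT hdeg hnp
  · refine ⟨tGraph n, ⟨tGraph_conn hn, tGraph_acyclic hn⟩, deg_all hn, tGraph_noP6 hn,
      0, ?_, ?_⟩
    · rw [ncard_eq_deg, deg_root hn]
    · intro v hv
      rw [SimpleGraph.mem_neighborSet, tGraph_adj hn] at hv
      have hb : 1 ≤ (v : ℕ) ∧ (v : ℕ) ≤ n := by
        rcases hv with ⟨h0, hp⟩ | ⟨h0, hp⟩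
        · simp only [Fin.val_zero] at hp
          unfold par at hp
          split_ifs at hp with h <;> omega
        · simp only [Fin.val_zero] at h0
          omega
      rw [ncard_eq_deg, deg_mid hn v hb.1 hb.2]
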